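/- arXiv:1509.05702 — 5 statements merged into one kernel-verified Lean document; each statement's English description precedes it below -/
import Mathlib

section
/- In any associative ring, if x and y are elements satisfying xy − yx = −1, then for every positive integer m one has (xy)^m = ∑_{i=1}^{m} S(m, i) x^i y^i. -/
/-- Stirling numbers of the second kind. -/
def stirling : ℕ → ℕ → ℕ
  | 0, 0 => 1
  | 0, _ + 1 => 0
  | _ + 1, 0 => 0
  | N + 1, n + 1 => (n + 1) * stirling N (n + 1) + stirling N n

lemma stirling_zero_right (n : ℕ) : stirling (n + 1) 0 = 0 := rfl

lemma stirling_eq_zero : ∀ n k : ℕ, n < k → stirling n k = 0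
  | 0, k + 1, _ => rfl
  | n + 1, k + 1, h => by
    have h1 : n < k + 1 := by omega
    have h2 : n < k := by omega
    simp [stirling, stirling_eq_zero n (k+1) h1, stirling_eq_zero n k h2]

section
variable {R : Type*} [Ring R] (x y : R)

lemma comm_pow (hxy : x * y - y * x = -1) :
    ∀ i : ℕ, y * x ^ (i + 1) = x ^ (i + 1) * y + (i + 1) • x ^ i := by
  have hyx : y * x = x * y + 1 := by
    have h2 : y * x - x * y = 1 := by rw [← neg_sub, hxy, neg_neg]
    have := sub_eq_iff_eq_add.mp h2
    rw [this]; abel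
  intro i
  induction i with
  | zero => simp [hyx]
  | succ j ih =>
    calc y * x ^ (j + 2) = (y * x ^ (j + 1)) * x := by rw [pow_succ, mul_assoc]
      _ = (x ^ (j + 1) * y + (j + 1) • x ^ j) * x := by rw [ih]
      _ = x ^ (j + 1) * (y * x) + (j + 1) • x ^ (j + 1) := by
          rw [add_mul, mul_assoc, smul_mul_assoc, ← pow_succ]
      _ = x ^ (j + 2) * y + (j + 2) • x ^ (j + 1) := by
          rw [hyx, mul_add, mul_one, ← mul_assoc, ← pow_succ, succ_nsmul (x ^ (j+1)) (j+1)]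
          abel

lemma key (hxy : x * y - y * x = -1) (i : ℕ) :
    (x * y) * (x ^ i * y ^ i) = x ^ (i + 1) * y ^ (i + 1) + i • (x ^ i * y ^ i) := by
  cases i with
  | zero => simp
  | succ j =>
    calc (x * y) * (x ^ (j + 1) * y ^ (j + 1))
        = x * (y * x ^ (j + 1)) * y ^ (j + 1) := by
          rw [mul_assoc, mul_assoc, mul_assoc]
      _ = x * (x ^ (j + 1) * y + (j + 1) • x ^ j) * y ^ (j + 1) := by
          rw [comm_pow x y hxy]
      _ = x ^ (j + 2) * y ^ (j + 2) + (j + 1) • (x ^ (j + 1) * y ^ (j + 1)) := by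
          rw [mul_add, add_mul]
          congr 1
          · rw [← mul_assoc, ← pow_succ', mul_assoc, ← pow_succ']
          · rw [mul_smul_comm, smul_mul_assoc, ← pow_succ']

lemma aux (hxy : x * y - y * x = -1) :
    ∀ m : ℕ, (x * y) ^ (m + 1) =
      ∑ i ∈ Finset.range (m + 2), stirling (m + 1) i • (x ^ i * y ^ i) := by
  intro m
  induction m with
  | zero => simp [stirling, Finset.sum_range_succ]
  | succ m ih =>
    calc (x * y) ^ (m + 2) = (x * y) * (x * y) ^ (m + 1) := by rw [pow_succ']
      _ = ∑ i ∈ Finset.range (m + 2),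
            stirling (m + 1) i • ((x * y) * (x ^ i * y ^ i)) := by
          rw [ih, Finset.mul_sum]
          exact Finset.sum_congr rfl fun i _ => mul_smul_comm _ _ _
      _ = ∑ i ∈ Finset.range (m + 2),
            (stirling (m + 1) i • (x ^ (i + 1) * y ^ (i + 1))
              + (i * stirling (m + 1) i) • (x ^ i * y ^ i)) := by
          refine Finset.sum_congr rfl fun i _ => ?_
          rw [key x y hxy, smul_add, smul_smul, Nat.mul_comm]
      _ = ∑ i ∈ Finset.range (m + 2), stirling (m + 1) i • (x ^ (i + 1) * y ^ (i + 1))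
            + ∑ i ∈ Finset.range (m + 2), (i * stirling (m + 1) i) • (x ^ i * y ^ i) := by
          rw [Finset.sum_add_distrib]
      _ = ∑ i ∈ Finset.range (m + 2),
            (stirling (m + 1) i + (i + 1) * stirling (m + 1) (i + 1)) • (x ^ (i+1) * y ^ (i+1)) := by
          rw [Finset.sum_range_succ' (fun i => (i * stirling (m + 1) i) • (x ^ i * y ^ i)) (m + 1)]
          simp only [zero_mul, zero_smul, add_zero]
          have hz : ((m + 1 + 1) * stirling (m + 1) (m + 1 + 1)) • (x ^ (m+1+1) * y ^ (m+1+1))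
              = (0 : R) := by
            rw [stirling_eq_zero (m+1) (m+1+1) (by omega)]; simp
          rw [show (∑ k ∈ Finset.range (m+1), ((k+1) * stirling (m + 1) (k+1)) • (x ^ (k+1) * y ^ (k+1)))
              = ∑ k ∈ Finset.range (m+2), ((k+1) * stirling (m + 1) (k+1)) • (x ^ (k+1) * y ^ (k+1)) by
              rw [Finset.sum_range_succ
                (fun k => ((k+1) * stirling (m + 1) (k+1)) • (x ^ (k+1) * y ^ (k+1))) (m+1), hz,
                add_zero]]
          rw [← Finset.sum_add_distrib]
          exact Finset.sum_congr rfl fun i _ => (add_smul _ _ _).symm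
      _ = ∑ i ∈ Finset.range (m + 3), stirling (m + 2) i • (x ^ i * y ^ i) := by
          rw [Finset.sum_range_succ' (fun i => stirling (m + 2) i • (x ^ i * y ^ i)) (m + 2)]
          simp only [stirling_zero_right, zero_smul, add_zero]
          refine Finset.sum_congr rfl fun i _ => ?_
          show _ = stirling (m + 2) (i + 1) • _
          rw [show stirling (m + 2) (i + 1)
              = (i + 1) * stirling (m + 1) (i + 1) + stirling (m + 1) i from rfl]
          rw [Nat.add_comm]
end

theorem weyl_xy_pow {R : Type*} [Ring R] (x y : R) (hxy : x * y - y * x = -1)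
    (m : ℕ) (hm : 1 ≤ m) :
    (x * y) ^ m = ∑ i ∈ Finset.Icc 1 m, (stirling m i : R) * x ^ i * y ^ i := by
  obtain ⟨n, rfl⟩ : ∃ n, m = n + 1 := ⟨m - 1, by omega⟩
  rw [aux x y hxy n]
  have hset : Finset.range (n + 2) = insert 0 (Finset.Icc 1 (n + 1)) := by
    ext i; simp; omega
  rw [hset, Finset.sum_insert (by simp)]
  simp only [stirling_zero_right, zero_smul, zero_add]
  refine Finset.sum_congr rfl fun i _ => ?_
  rw [nsmul_eq_mul, mul_assoc]
end

section
/- For every nonnegative integer n and all real x, the Hermite polynomial admits the integral representation H_n(x) = ((−2i)^n e^{x²}/√π) ∫_{−∞}^{∞} ξ^n e^{2ixξ} e^{−ξ²} dξ. -/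
open MeasureTheory Complex Real FourierTransform

lemma ofReal_iteratedDeriv_aux {f : ℝ → ℝ} {n : ℕ} (hf : ContDiff ℝ n f) (x : ℝ) :
    iteratedDeriv n (fun y => (f y : ℂ)) x = ((iteratedDeriv n f x : ℝ) : ℂ) := by
  have h : (fun y => (f y : ℂ)) = (Complex.ofRealCLM ∘ f) := rfl
  rw [h, iteratedDeriv_eq_iteratedFDeriv, iteratedDeriv_eq_iteratedFDeriv,
    Complex.ofRealCLM.iteratedFDeriv_comp_left hf.contDiffAt le_rfl]
  rfl

lemma iteratedDeriv_const_mul_fun {f : ℝ → ℂ} {n : ℕ} (h : ContDiff ℝ n f) (c : ℂ) (x : ℝ) :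
    iteratedDeriv n (fun y => c * f y) x = c * iteratedDeriv n f x := by
  have : (fun y => c * f y) = c • f := by funext y; simp
  rw [this, ← iteratedDerivWithin_univ, ← iteratedDerivWithin_univ,
    iteratedDerivWithin_const_smul (Set.mem_univ x) uniqueDiffOn_univ c h.contDiffWithinAt]
  simp

/-- The physicists' Hermite polynomial via Rodrigues's formula. -/
noncomputable def hermiteR (n : ℕ) (x : ℝ) : ℝ :=
  (-1 : ℝ) ^ n * Real.exp (x ^ 2) * iteratedDeriv n (fun y => Real.exp (-y ^ 2)) x

theorem hermite_integral_representation (n : ℕ) (x : ℝ) :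
    (hermiteR n x : ℂ)
      = (-2 * I) ^ n * Real.exp (x ^ 2) / Real.sqrt Real.pi *
        ∫ ξ : ℝ, (ξ : ℂ) ^ n * Complex.exp (2 * I * x * ξ) * Complex.exp (-(ξ : ℂ) ^ 2) := by
  set f : ℝ → ℂ := fun ξ : ℝ => Complex.exp (-(ξ : ℂ) ^ 2) with hf_def
  set J : ℂ := ∫ ξ : ℝ, (ξ : ℂ) ^ n * Complex.exp (2 * I * x * ξ) * Complex.exp (-(ξ : ℂ) ^ 2)
    with hJ_def
  have hπ : (π : ℝ) ≠ 0 := Real.pi_ne_zero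
  have hπc : (π : ℂ) ≠ 0 := Complex.ofReal_ne_zero.2 hπ
  have hs : ((Real.sqrt π : ℝ) : ℂ) ≠ 0 :=
    Complex.ofReal_ne_zero.2 (ne_of_gt (Real.sqrt_pos.2 Real.pi_pos))
  have habsf : ∀ ξ : ℝ, ‖f ξ‖ = Real.exp (-ξ ^ 2) := by
    intro ξ
    rw [hf_def]
    simp only
    have hre : (-(ξ : ℂ) ^ 2).re = -ξ ^ 2 := by simp [← Complex.ofReal_pow]
    rw [Complex.norm_exp, hre]
  -- integrability
  have hint : ∀ k : ℕ, Integrable (fun ξ : ℝ => (ξ : ℝ) ^ k • f ξ) := by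
    intro k
    have h1 : Integrable (fun y : ℝ => y ^ (k : ℝ) * Real.exp (-1 * y ^ 2)) :=
      integrable_rpow_mul_exp_neg_mul_sq one_pos (neg_one_lt_zero.trans_le (Nat.cast_nonneg k))
    simp_rw [Real.rpow_natCast, neg_one_mul] at h1
    refine h1.norm.mono' ?_ ?_
    · apply Continuous.aestronglyMeasurable
      apply Continuous.smul (f := fun ξ : ℝ => ξ ^ k) (g := f) (by fun_prop)
      exact Complex.continuous_exp.comp (by fun_prop)
    · filter_upwards with ξ
      simp only [norm_smul, Real.norm_eq_abs, norm_norm, habsf ξ,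
        abs_mul, Real.abs_exp, _root_.abs_pow]
      exact le_refl _
  -- smoothness of the complex gaussian
  have hofReal : ContDiff ℝ n fun ξ : ℝ => (ξ : ℂ) := Complex.ofRealCLM.contDiff
  have hH : ContDiff ℝ n f :=
    (Complex.contDiff_exp (𝕜 := ℝ)).comp ((hofReal.pow 2).neg)
  -- Fourier transform of the gaussian
  have hF : 𝓕 f = fun v : ℝ => ((Real.sqrt π : ℝ) : ℂ) * f (-π * v) := by
    funext v
    rw [Real.fourier_real_eq_integral_exp_smul]
    have key := fourierIntegral_gaussian (b := 1) (by norm_num) ((-2 * π * v : ℝ) : ℂ)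
    simp only [neg_one_mul] at key
    have hpt : ∀ ξ : ℝ, Complex.exp (((-2 * π * ξ * v : ℝ) : ℂ) * I) • f ξ
        = Complex.exp (I * ((-2 * π * v : ℝ) : ℂ) * ξ) * Complex.exp (-(ξ : ℂ) ^ 2) := by
      intro ξ
      rw [smul_eq_mul,
        show ((-2 * π * ξ * v : ℝ) : ℂ) * I = I * ((-2 * π * v : ℝ) : ℂ) * ξ by push_cast; ring]
    simp only [hpt]
    rw [key, div_one]
    have hpow : ((π : ℂ)) ^ (1 / 2 : ℂ) = ((Real.sqrt π : ℝ) : ℂ) := by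
      rw [Real.sqrt_eq_rpow, Complex.ofReal_cpow Real.pi_pos.le]
      norm_num
    rw [hpow]
    congr 1
    rw [show (-π * v : ℝ) = ((-π * v : ℝ) : ℝ) from rfl]
    show Complex.exp _ = Complex.exp (-((-π * v : ℝ) : ℂ) ^ 2)
    congr 1
    push_cast
    ring
  -- the iterated derivative of the Fourier transform
  have hD := Real.iteratedDeriv_fourier (f := f) (N := n)
    (fun k _ => hint k) (le_refl (n : ℕ∞))
  set v₀ : ℝ := -(x / π) with hv₀
  have hxv : -π * v₀ = x := by rw [hv₀]; field_simp
  -- left-hand side of hD at v₀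
  have hcomp : ContDiff ℝ n fun v : ℝ => f (-π * v) :=
    hH.comp (contDiff_const.mul contDiff_id)
  have lhs_eq : iteratedDeriv n (𝓕 f) v₀
      = ((Real.sqrt π : ℝ) : ℂ) * ((-π : ℝ) ^ n • iteratedDeriv n f x) := by
    rw [hF, iteratedDeriv_const_mul_fun hcomp, iteratedDeriv_comp_const_smul hH (-π)]
    simp only
    rw [hxv]
  -- right-hand side of hD at v₀
  have rhs_eq : 𝓕 (fun ξ : ℝ => (-2 * ↑π * I * ξ) ^ n • f ξ) v₀ = (-2 * ↑π * I) ^ n * J := by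
    rw [Real.fourier_real_eq_integral_exp_smul, hJ_def, ← integral_const_mul]
    have hpt : ∀ ξ : ℝ, Complex.exp (((-2 * π * ξ * v₀ : ℝ) : ℂ) * I)
          • ((-2 * (π : ℂ) * I * ξ) ^ n • f ξ)
        = (-2 * (π : ℂ) * I) ^ n
            * ((ξ : ℂ) ^ n * Complex.exp (2 * I * x * ξ) * Complex.exp (-(ξ : ℂ) ^ 2)) := by
      intro ξ
      have harg : ((-2 * π * ξ * v₀ : ℝ) : ℂ) * I = 2 * I * x * ξ := by
        rw [hv₀, show (-2 * π * ξ * -(x / π) : ℝ) = 2 * x * ξ by field_simp]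
        push_cast
        ring
      rw [smul_eq_mul, smul_eq_mul, harg, mul_pow]
      ring
    simp only [hpt]
  have key : ((Real.sqrt π : ℝ) : ℂ) * ((-π : ℝ) ^ n • iteratedDeriv n f x)
      = (-2 * ↑π * I) ^ n * J := by
    rw [← lhs_eq, ← rhs_eq, hD]
  -- identify the iterated derivative of f with the real one
  have hRe : ContDiff ℝ n fun y : ℝ => Real.exp (-y ^ 2) :=
    Real.contDiff_exp.comp ((contDiff_id.pow 2).neg)
  have hfeq : f = fun y : ℝ => ((Real.exp (-y ^ 2) : ℝ) : ℂ) := by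
    funext y
    rw [hf_def]
    simp only
    rw [Complex.ofReal_exp]
    congr 1
    push_cast
    ring
  have hfre : iteratedDeriv n f x
      = ((iteratedDeriv n (fun y => Real.exp (-y ^ 2)) x : ℝ) : ℂ) := by
    rw [hfeq, ofReal_iteratedDeriv_aux hRe x]
  set D : ℝ := iteratedDeriv n (fun y => Real.exp (-y ^ 2)) x with hD_def
  rw [hfre] at key
  rw [Complex.real_smul] at key
  push_cast at key
  have h1 : ((-2 : ℂ) * ↑π * I) ^ n = (π : ℂ) ^ n * ((-2 : ℂ) * I) ^ n := by
    rw [show ((-2 : ℂ) * ↑π * I) = (π : ℂ) * ((-2 : ℂ) * I) by ring, mul_pow]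
  have h2 : (-(π : ℂ)) ^ n = (-1 : ℂ) ^ n * (π : ℂ) ^ n := by rw [neg_pow]
  have h3 : (π : ℂ) ^ n * (((Real.sqrt π : ℝ) : ℂ) * ((-1 : ℂ) ^ n * (D : ℂ)))
      = (π : ℂ) ^ n * (((-2 : ℂ) * I) ^ n * J) := by
    rw [h2] at key
    linear_combination key + J * h1
  have hJ : ((Real.sqrt π : ℝ) : ℂ) * ((-1 : ℂ) ^ n * (D : ℂ)) = ((-2 : ℂ) * I) ^ n * J :=
    mul_left_cancel₀ (pow_ne_zero n hπc) h3
  rw [hermiteR, ← hD_def]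
  push_cast
  rw [div_mul_eq_mul_div, eq_div_iff hs]
  linear_combination Complex.exp ((x : ℂ) ^ 2) * hJ
end

section
/- Let L_t denote the operator f ↦ −t f'(t) acting on smooth functions of t > 0. For every nonnegative integer N and all real x, t: applying L N times to the function t ↦ e^{−(x−t)²+x²} gives (−1)^N e^{−(x−t)²+x²} ∑_{n=0}^{N} S(N, n) t^n H_n(x − t). -/
open scoped ContDiff


/-- The operator `L = -t ∂ₜ`. -/
noncomputable def Lop (f : ℝ → ℝ) : ℝ → ℝ := fun t => -t * deriv f t

lemma G_contDiff (n : ℕ) : ContDiff ℝ ∞ (iteratedDeriv n (fun y : ℝ => Real.exp (-y ^ 2))) := by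
  rw [iteratedDeriv_eq_iterate]
  exact ContDiff.iterate_deriv n (by fun_prop)

lemma hasDerivAt_G (n : ℕ) (x : ℝ) :
    HasDerivAt (iteratedDeriv n (fun y : ℝ => Real.exp (-y ^ 2)))
      (iteratedDeriv (n + 1) (fun y : ℝ => Real.exp (-y ^ 2)) x) x := by
  have h := ((G_contDiff n).differentiable (by simp)).differentiableAt (x := x)
  simpa [iteratedDeriv_succ] using h.hasDerivAt

lemma hasDerivAt_hermiteR (n : ℕ) (x : ℝ) :
    HasDerivAt (hermiteR n) (2 * x * hermiteR n x - hermiteR (n + 1) x) x := by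
  have h1 : HasDerivAt (fun y : ℝ => Real.exp (y ^ 2)) (Real.exp (x ^ 2) * (2 * x)) x := by
    simpa using (hasDerivAt_pow 2 x).exp
  have h := ((h1.mul (hasDerivAt_G n x)).const_mul ((-1 : ℝ) ^ n))
  have he : hermiteR n = fun y => (-1 : ℝ) ^ n *
      (Real.exp (y ^ 2) * iteratedDeriv n (fun y : ℝ => Real.exp (-y ^ 2)) y) := by
    funext y; simp [hermiteR, mul_assoc]
  rw [he]
  refine h.congr_deriv ?_
  simp only [hermiteR, pow_succ]
  ring

lemma stirling_eq_zero_s15 (N n : ℕ) (h : N < n) : stirling N n = 0 := by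
  induction N generalizing n with
  | zero => cases n with
    | zero => omega
    | succ m => rfl
  | succ N ih =>
    cases n with
    | zero => omega
    | succ m =>
      have h1 : N < m + 1 := by omega
      have h2 : N < m := by omega
      simp [stirling, ih _ h1, ih _ h2]

lemma hasDerivAt_term (x : ℝ) (n : ℕ) (t : ℝ) :
    HasDerivAt (fun s : ℝ => Real.exp (-(x - s) ^ 2 + x ^ 2) * (s ^ n * hermiteR n (x - s)))
      (Real.exp (-(x - t) ^ 2 + x ^ 2) *
        ((n : ℝ) * t ^ (n - 1) * hermiteR n (x - t) + t ^ n * hermiteR (n + 1) (x - t))) t := by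
  have hin : HasDerivAt (fun s : ℝ => x - s) (-1) t := (hasDerivAt_id t).const_sub x
  have hu : HasDerivAt (fun s : ℝ => -(x - s) ^ 2 + x ^ 2) (2 * (x - t)) t := by
    have := ((hin.pow 2).neg).add_const (x ^ 2)
    simpa using this.congr_deriv (by push_cast; ring)
  have hE := hu.exp
  have hH : HasDerivAt (fun s : ℝ => hermiteR n (x - s))
      (hermiteR (n + 1) (x - t) - 2 * (x - t) * hermiteR n (x - t)) t := by
    have := (hasDerivAt_hermiteR n (x - t)).comp t hin
    exact this.congr_deriv (by ring)
  have hp := hasDerivAt_pow n t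
  have := hE.mul (hp.mul hH)
  exact this.congr_deriv (by simp only [Pi.mul_apply]; ring)

lemma tmul (n : ℕ) (t : ℝ) : t * ((n : ℝ) * t ^ (n - 1)) = (n : ℝ) * t ^ n := by
  cases n with
  | zero => simp
  | succ m => push_cast; rw [pow_succ]; ring

lemma sum_step (N : ℕ) (t : ℝ) (H : ℕ → ℝ) :
    ∑ m ∈ Finset.range (N + 2), (stirling (N + 1) m : ℝ) * t ^ m * H m
      = ∑ n ∈ Finset.range (N + 1),
          (stirling N n : ℝ) * ((n : ℝ) * t ^ n * H n + t ^ (n + 1) * H (n + 1)) := by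
  rw [Finset.sum_range_succ']
  have h0 : (stirling (N + 1) 0 : ℝ) = 0 := by simp [stirling]
  rw [h0, zero_mul, zero_mul, add_zero]
  simp only [mul_add]
  rw [Finset.sum_add_distrib]
  have e1 : ∑ n ∈ Finset.range (N + 1), (stirling N n : ℝ) * ((n : ℝ) * t ^ n * H n)
      = ∑ k ∈ Finset.range (N + 1), ((k : ℝ) + 1) * (stirling N (k + 1) : ℝ) * t ^ (k + 1) * H (k + 1) := by
    rw [Finset.sum_range_succ', Finset.sum_range_succ]
    simp [stirling_eq_zero_s15 N (N + 1) (by omega)]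
    apply Finset.sum_congr rfl
    intro k _
    ring
  rw [e1, ← Finset.sum_add_distrib]
  apply Finset.sum_congr rfl
  intro k _
  have : (stirling (N + 1) (k + 1) : ℝ) = ((k : ℝ) + 1) * (stirling N (k + 1) : ℝ) + stirling N k := by
    show ((stirling (N + 1) (k + 1) : ℕ) : ℝ) = _
    rw [show stirling (N + 1) (k + 1) = (k + 1) * stirling N (k + 1) + stirling N k from rfl]
    push_cast; ring
  rw [this]; ring

theorem Lop_pow_generating_function (N : ℕ) (x t : ℝ) :
    (Lop^[N] (fun s => Real.exp (-(x - s) ^ 2 + x ^ 2))) t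
      = (-1 : ℝ) ^ N * Real.exp (-(x - t) ^ 2 + x ^ 2) *
          ∑ n ∈ Finset.range (N + 1), (stirling N n : ℝ) * t ^ n * hermiteR n (x - t) := by
  induction N generalizing t with
  | zero =>
    have h0 : hermiteR 0 (x - t) = 1 := by
      simp [hermiteR, iteratedDeriv_zero, ← Real.exp_add]
    simp [stirling, h0]
  | succ N ih =>
    rw [Function.iterate_succ_apply']
    have hfun : Lop^[N] (fun s => Real.exp (-(x - s) ^ 2 + x ^ 2))
        = fun s => ∑ n ∈ Finset.range (N + 1),
            ((-1 : ℝ) ^ N * (stirling N n : ℝ)) *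
              (Real.exp (-(x - s) ^ 2 + x ^ 2) * (s ^ n * hermiteR n (x - s))) := by
      funext s
      rw [ih s, Finset.mul_sum]
      apply Finset.sum_congr rfl
      intro n _
      ring
    rw [hfun]
    have hD : HasDerivAt (fun s : ℝ => ∑ n ∈ Finset.range (N + 1),
          ((-1 : ℝ) ^ N * (stirling N n : ℝ)) *
            (Real.exp (-(x - s) ^ 2 + x ^ 2) * (s ^ n * hermiteR n (x - s))))
        (∑ n ∈ Finset.range (N + 1), ((-1 : ℝ) ^ N * (stirling N n : ℝ)) *
            (Real.exp (-(x - t) ^ 2 + x ^ 2) *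
              ((n : ℝ) * t ^ (n - 1) * hermiteR n (x - t) + t ^ n * hermiteR (n + 1) (x - t)))) t := by
      apply HasDerivAt.fun_sum
      intro n _
      exact (hasDerivAt_term x n t).const_mul _
    rw [Lop, hD.deriv]
    rw [Finset.mul_sum, sum_step N t (fun n => hermiteR n (x - t)), Finset.mul_sum]
    apply Finset.sum_congr rfl
    intro n _
    cases n with
    | zero => push_cast; ring
    | succ m => simp only [Nat.add_sub_cancel]; push_cast; ring
end

section
/- For all α > 1 and all t > 0, α e^{−2t} ≤ (1 − e^{−2t})/(1 − e^{−2t/α}) ≤ α. -/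
theorem mehler_alpha_quotient_bounds (α t : ℝ) (hα : 1 < α) (ht : 0 < t) :
    α * Real.exp (-2 * t) ≤ (1 - Real.exp (-2 * t)) / (1 - Real.exp (-2 * t / α)) ∧
    (1 - Real.exp (-2 * t)) / (1 - Real.exp (-2 * t / α)) ≤ α := by
  have hα0 : (0:ℝ) < α := by linarith
  set y := Real.exp (-2 * t / α) with hy
  have hy0 : 0 < y := Real.exp_pos _
  have hy1 : y < 1 := by
    rw [hy, Real.exp_lt_one_iff]
    have h : 0 < 2 * t / α := by positivity
    have : -2 * t / α = -(2 * t / α) := by ring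
    linarith [this ▸ neg_neg_of_pos h]
  have hpow : Real.exp (-2 * t) = y ^ α := by
    rw [hy, ← Real.exp_mul]
    congr 1
    field_simp
  have hden : 0 < 1 - y := by linarith
  -- Bernoulli for y: 1 + α*(y-1) ≤ y^α
  have hb1 : 1 + α * (y - 1) ≤ y ^ α := by
    have := one_add_mul_self_le_rpow_one_add (s := y - 1) (by linarith) hα.le
    simpa using this
  -- Bernoulli for 1/y: 1 + α*(1/y - 1) ≤ (1/y)^α
  have hb2 : 1 + α * (1 / y - 1) ≤ (1 / y) ^ α := by
    have h1 : (-1:ℝ) ≤ 1 / y - 1 := by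
      have : 0 < 1 / y := by positivity
      linarith
    simpa using one_add_mul_self_le_rpow_one_add h1 hα.le
  have hyα0 : 0 < y ^ α := Real.rpow_pos_of_pos hy0 _
  constructor
  · -- lower bound: α * y^α ≤ (1 - y^α)/(1-y)
    rw [hpow, le_div_iff₀ hden]
    -- need α * y^α * (1-y) ≤ 1 - y^α
    have hinv : y ^ α * (1 / y) ^ α = 1 := by
      rw [← Real.mul_rpow hy0.le (by positivity), mul_one_div, div_self hy0.ne', Real.one_rpow]
    have h2 : y ^ α * (1 + α * (1 / y - 1)) ≤ 1 := by
      calc y ^ α * (1 + α * (1 / y - 1)) ≤ y ^ α * (1 / y) ^ α :=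
            mul_le_mul_of_nonneg_left hb2 hyα0.le
        _ = 1 := hinv
    have h3 : α * (1 - y) ≤ α * (1 / y - 1) := by
      have : 1 - y ≤ 1 / y - 1 := by
        rw [le_sub_iff_add_le, le_div_iff₀ hy0]
        nlinarith [sq_nonneg (1 - y)]
      nlinarith
    nlinarith
  · rw [hpow, div_le_iff₀ hden]
    nlinarith
end

section
/- For all α > 1, t > 0, and x, y ∈ ℝ^d, |e^{−t/α} x − y|² / (1 − e^{−2t/α}) ≥ (α/2) e^{−2t} |e^{−t} x − y|² / (1 − e^{−2t}) − t² min(|x|², |y|²) / (1 − e^{−2t/α}). -/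
set_option maxHeartbeats 800000


theorem mehler_alpha_quadratic_bound (d : ℕ) (α t : ℝ) (hα : 1 < α) (ht : 0 < t)
    (x y : EuclideanSpace ℝ (Fin d)) :
    ‖Real.exp (-t / α) • x - y‖ ^ 2 / (1 - Real.exp (-2 * t / α))
      ≥ α / 2 * Real.exp (-2 * t) * (‖Real.exp (-t) • x - y‖ ^ 2 / (1 - Real.exp (-2 * t)))
        - t ^ 2 * min (‖x‖ ^ 2) (‖y‖ ^ 2) / (1 - Real.exp (-2 * t / α)) := by
  have hα0 : (0:ℝ) < α := lt_trans one_pos hα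
  set a := Real.exp (-t / α) with hadef
  set b := Real.exp (-t) with hbdef
  clear_value a b
  have ha0 : 0 < a := hadef ▸ Real.exp_pos _
  have hb0 : 0 < b := hbdef ▸ Real.exp_pos _
  have ha1 : a < 1 := by
    rw [hadef]
    rw [neg_div]
    apply Real.exp_lt_one_iff.mpr
    have : 0 < t / α := div_pos ht hα0
    linarith
  have hb1 : b < 1 := by
    rw [hbdef]
    apply Real.exp_lt_one_iff.mpr
    linarith
  have hea2 : Real.exp (-2 * t / α) = a ^ 2 := by
    rw [hadef, sq, ← Real.exp_add]; congr 1; ring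
  have heb2 : Real.exp (-2 * t) = b ^ 2 := by
    rw [hbdef, sq, ← Real.exp_add]; congr 1; ring
  have hDa : 0 < 1 - a ^ 2 := by nlinarith
  have hDb : 0 < 1 - b ^ 2 := by nlinarith
  -- a - b ≤ t
  have hab : a - b ≤ t := by
    have h1 : -t + 1 ≤ b := by rw [hbdef]; exact Real.add_one_le_exp (-t)
    linarith
  have hab' : b ≤ a := by
    rw [hadef, hbdef]
    apply Real.exp_le_exp.mpr
    rw [neg_div]
    have : t / α ≤ t := by
      rw [div_le_iff₀ hα0]; nlinarith
    linarith
  -- b / a = exp (t/α - t), and 1 - b/a ≤ t, b/a ≤ 1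
  have hba : b / a = Real.exp (t / α - t) := by
    rw [hadef, hbdef, ← Real.exp_sub]; congr 1; ring
  have hba1 : b / a ≤ 1 := by
    rw [hba]
    apply Real.exp_le_one_iff.mpr
    have : 0 < t / α := div_pos ht hα0
    have : t / α ≤ t := by rw [div_le_iff₀ hα0]; nlinarith
    linarith
  have hba2 : 1 - b / a ≤ t := by
    have h1 : t / α - t + 1 ≤ b / a := by rw [hba]; exact Real.add_one_le_exp _
    have h2 : 0 < t / α := div_pos ht hα0
    linarith
  have hba0 : 0 ≤ b / a := le_of_lt (div_pos hb0 ha0)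
  -- vector decompositions
  have hxeq : b • x - y = (a • x - y) + (b - a) • x := by module
  have hyeq : b • x - y = (b / a) • (a • x - y) + (1 - b / a) • (-y) := by
    have hc : (b / a) * a = b := div_mul_cancel₀ b ha0.ne'
    rw [smul_sub, smul_smul, hc, sub_smul, one_smul, smul_neg]
    abel
  have hx : ‖b • x - y‖ ≤ ‖a • x - y‖ + t * ‖x‖ := by
    calc ‖b • x - y‖ = ‖(a • x - y) + (b - a) • x‖ := by rw [← hxeq]
      _ ≤ ‖a • x - y‖ + ‖(b - a) • x‖ := norm_add_le _ _
      _ ≤ ‖a • x - y‖ + t * ‖x‖ := by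
          have h1 : ‖(b - a) • x‖ = |b - a| * ‖x‖ := by
            rw [norm_smul, Real.norm_eq_abs]
          have h2 : |b - a| ≤ t := by
            rw [abs_sub_comm, abs_of_nonneg (by linarith)]
            linarith
          have := norm_nonneg x
          nlinarith
  have hy : ‖b • x - y‖ ≤ ‖a • x - y‖ + t * ‖y‖ := by
    calc ‖b • x - y‖ = ‖(b / a) • (a • x - y) + (1 - b / a) • (-y)‖ := by rw [← hyeq]
      _ ≤ ‖(b / a) • (a • x - y)‖ + ‖(1 - b / a) • (-y)‖ := norm_add_le _ _
      _ ≤ ‖a • x - y‖ + t * ‖y‖ := by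
          have h1 : ‖(b / a) • (a • x - y)‖ = (b / a) * ‖a • x - y‖ := by
            rw [norm_smul, Real.norm_eq_abs, abs_of_nonneg hba0]
          have h2 : ‖(1 - b / a) • (-y)‖ = (1 - b / a) * ‖y‖ := by
            rw [norm_smul, Real.norm_eq_abs, abs_of_nonneg (by linarith), norm_neg]
          have h3 := norm_nonneg (a • x - y)
          have h4 := norm_nonneg y
          nlinarith
  -- generalize norms to scalars
  have hN0 := norm_nonneg (b • x - y)
  have hP0 := norm_nonneg (a • x - y)
  have hX0 := norm_nonneg x
  have hY0 := norm_nonneg y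
  set N := ‖b • x - y‖ with hNdef
  set P := ‖a • x - y‖ with hPdef
  set X := ‖x‖ with hXdef
  set Y := ‖y‖ with hYdef
  clear_value N P X Y
  -- quadratic bound
  have hQ : N ^ 2 ≤ 2 * P ^ 2 + 2 * t ^ 2 * min (X ^ 2) (Y ^ 2) := by
    rcases le_total X Y with h | h
    · have hmin : min (X ^ 2) (Y ^ 2) = X ^ 2 :=
        min_eq_left (pow_le_pow_left₀ hX0 h 2)
      rw [hmin]
      have hsq : N ^ 2 ≤ (P + t * X) ^ 2 :=
        pow_le_pow_left₀ hN0 hx 2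
      nlinarith [hsq, sq_nonneg (P - t * X)]
    · have hmin : min (X ^ 2) (Y ^ 2) = Y ^ 2 :=
        min_eq_right (pow_le_pow_left₀ hY0 h 2)
      rw [hmin]
      have hsq : N ^ 2 ≤ (P + t * Y) ^ 2 :=
        pow_le_pow_left₀ hN0 hy 2
      nlinarith [hsq, sq_nonneg (P - t * Y)]
  -- coefficient bound : α * b^2 * (1 - a^2) ≤ 1 - b^2
  have key : α * b ^ 2 * (1 - a ^ 2) ≤ 1 - b ^ 2 := by
    have h3 : 1 - a ^ 2 ≤ 2 * t / α := by
      have h := Real.add_one_le_exp (-2 * t / α)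
      rw [hea2] at h
      have : -2 * t / α = -(2 * t / α) := by ring
      rw [this] at h
      linarith
    have hb2e : b ^ 2 * Real.exp (2 * t) = 1 := by
      rw [← heb2, ← Real.exp_add]
      norm_num
    have h4 : 2 * t * b ^ 2 ≤ 1 - b ^ 2 := by
      have h := Real.add_one_le_exp (2 * t)
      have h' := mul_le_mul_of_nonneg_left h (sq_nonneg b)
      rw [hb2e] at h'
      nlinarith [h']
    have h5 : α * b ^ 2 * (1 - a ^ 2) ≤ α * b ^ 2 * (2 * t / α) := by
      apply mul_le_mul_of_nonneg_left h3
      positivity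
    have h6 : α * b ^ 2 * (2 * t / α) = 2 * t * b ^ 2 := by
      field_simp
    linarith
  -- finish
  rw [hea2, heb2, ge_iff_le, sub_le_iff_le_add, ← add_div,
    mul_div_assoc' (α / 2 * b ^ 2), div_le_div_iff₀ hDb hDa]
  have hP : 0 ≤ P ^ 2 := sq_nonneg _
  have hm2 : 0 ≤ min (X ^ 2) (Y ^ 2) := le_min (sq_nonneg _) (sq_nonneg _)
  have c1 : α / 2 * b ^ 2 * (1 - a ^ 2) * N ^ 2
      ≤ α / 2 * b ^ 2 * (1 - a ^ 2) * (2 * P ^ 2 + 2 * t ^ 2 * min (X ^ 2) (Y ^ 2)) := by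
    apply mul_le_mul_of_nonneg_left hQ
    positivity
  have c2 : α * b ^ 2 * (1 - a ^ 2) * (P ^ 2 + t ^ 2 * min (X ^ 2) (Y ^ 2))
      ≤ (1 - b ^ 2) * (P ^ 2 + t ^ 2 * min (X ^ 2) (Y ^ 2)) := by
    apply mul_le_mul_of_nonneg_right key
    positivity
  nlinarith [c1, c2]
end
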